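/- Fix r ≥ 1. For every r-core γ and every n ∈ ℕ, the sum over all partitions λ reachable from γ by adding n r-ribbons of the square of the spin-generating polynomial F^{λ/γ}(q) = Σ_T q^{2·spin(T)} (sum over standard r-ribbon tableaux T of shape λ/γ) equals n!·((1−q^r)/(1−q))^n. -/

import Mathlib

open scoped Classical

/-- A doubly infinite bit sequence: a function `ℤ → ℕ` with all values `≤ 1`. -/
def IsBitSeq (s : ℤ → ℕ) : Prop := ∀ i, s i ≤ 1

/-- The quadruple `(w (i-r), t (i-r), s i, w i)` equals `(1,0,0,1)`:
the strip `t/s` with witness `w` has an `r`-ribbon at position `i`. -/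
def Quad (r : ℕ) (s t w : ℤ → ℕ) (i : ℤ) : Prop :=
  w (i - r) = 1 ∧ t (i - r) = 0 ∧ s i = 0 ∧ w i = 1

/-- `w` is a witness for `t/s` being a horizontal `r`-ribbon strip: for every `i`, the
quadruple `(w (i-r), t (i-r), s i, w i)` is of the form `(a,a,b,b)` or equals `(1,0,0,1)`,
the latter happening only finitely often. -/
def IsWitness (r : ℕ) (s t w : ℤ → ℕ) : Prop :=
  (∀ i : ℤ, (w (i - r) = t (i - r) ∧ s i = w i) ∨ Quad r s t w i) ∧
    {i : ℤ | Quad r s t w i}.Finite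

/-- `t/s` is a horizontal `r`-ribbon strip (`s ≤ʰᵣ t`). -/
def HStrip (r : ℕ) (s t : ℤ → ℕ) : Prop := ∃ w, IsWitness r s t w

/-- The height `∑_{j=1}^{r-1} w (i - j)` of a ribbon at position `i` read off from `w`. -/
def hgtAt (r : ℕ) (w : ℤ → ℕ) (i : ℤ) : ℕ := ∑ j ∈ Finset.Ico 1 r, w (i - (j : ℤ))

/-- A partition: a weakly decreasing, eventually zero function `ℕ → ℕ`. -/
def IsPartition (f : ℕ → ℕ) : Prop :=
  (∀ i j : ℕ, i ≤ j → f j ≤ f i) ∧ ∃ N : ℕ, ∀ n : ℕ, N ≤ n → f n = 0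

/-- The edge sequence of a partition: bit `1` exactly at the positions `f j - j - 1`
(for `j : ℕ`); it is eventually `1` to the left and `0` to the right, and adding a
square on diagonal `k` replaces the substring `10` at positions `(k-1, k)` by `01`. -/
noncomputable def edgeSeq (f : ℕ → ℕ) (k : ℤ) : ℕ :=
  if ∃ j : ℕ, (f j : ℤ) - (j : ℤ) - 1 = k then 1 else 0

/-- `t` is obtained from `s` by adding one `r`-ribbon with head on diagonal `p`:
the two sequences differ exactly at positions `p - r` and `p`, where the bits
`(1,0)` of `s` become `(0,1)` in `t`. -/
def EdgeFlip (r : ℕ) (s t : ℤ → ℕ) (p : ℤ) : Prop :=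
  s (p - r) = 1 ∧ s p = 0 ∧ t (p - r) = 0 ∧ t p = 1 ∧
    ∀ j : ℤ, j ≠ p - r → j ≠ p → s j = t j

/-- The height of the single `r`-ribbon added in the step from `s` to `t`. -/
noncomputable def stepHeight (r : ℕ) (s t : ℤ → ℕ) : ℕ :=
  if h : ∃ k : ℤ, EdgeFlip r s t k then hgtAt r s h.choose else 0

/-- The total height (twice the spin) of a standard `r`-ribbon tableau, i.e. of a
saturated chain of `r`-ribbon additions. -/
noncomputable def totH (r n : ℕ) (c : Fin (n + 1) → ℕ → ℕ) : ℕ :=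
  ∑ i : Fin n, stepHeight r (edgeSeq (c i.castSucc)) (edgeSeq (c i.succ))

/-- `c` is a standard `r`-ribbon tableau starting at `γ`: a saturated chain of `n`
`r`-ribbon additions. -/
def IsSRT (r n : ℕ) (γ : ℕ → ℕ) (c : Fin (n + 1) → ℕ → ℕ) : Prop :=
  c 0 = γ ∧ (∀ i, IsPartition (c i)) ∧
    ∀ i : Fin n, ∃ k : ℤ, EdgeFlip r (edgeSeq (c i.castSucc)) (edgeSeq (c i.succ)) k

namespace SP

open Polynomial

/-! ### Flips of bit sequences -/

/-- Add a ribbon at head position `p`: bit `p-r` becomes 0, bit `p` becomes 1. -/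
def flipA (r : ℕ) (s : ℤ → ℕ) (p : ℤ) : ℤ → ℕ :=
  fun k => if k = p - (r : ℤ) then 0 else if k = p then 1 else s k

/-- Remove a ribbon at head position `p`: bit `p-r` becomes 1, bit `p` becomes 0. -/
def flipR (r : ℕ) (s : ℤ → ℕ) (p : ℤ) : ℤ → ℕ :=
  fun k => if k = p - (r : ℤ) then 1 else if k = p then 0 else s k

def Addable (r : ℕ) (s : ℤ → ℕ) (p : ℤ) : Prop := s (p - (r : ℤ)) = 1 ∧ s p = 0

def Removable (r : ℕ) (s : ℤ → ℕ) (p : ℤ) : Prop := s (p - (r : ℤ)) = 0 ∧ s p = 1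

variable {r : ℕ} {s t : ℤ → ℕ} {p k : ℤ}

lemma sub_r_ne (hr : 1 ≤ r) (p : ℤ) : p - (r : ℤ) ≠ p := by
  have : (1 : ℤ) ≤ (r : ℤ) := by exact_mod_cast hr
  omega

lemma flipA_left : flipA r s p (p - (r:ℤ)) = 0 := by simp [flipA]

lemma flipA_right (hr : 1 ≤ r) : flipA r s p p = 1 := by
  simp [flipA, sub_r_ne hr p, (sub_r_ne hr p).symm]

lemma flipA_other (h1 : k ≠ p - (r:ℤ)) (h2 : k ≠ p) : flipA r s p k = s k := by
  simp [flipA, h1, h2]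

lemma flipR_left : flipR r s p (p - (r:ℤ)) = 1 := by simp [flipR]

lemma flipR_right (hr : 1 ≤ r) : flipR r s p p = 0 := by
  simp [flipR, (sub_r_ne hr p).symm]

lemma flipR_other (h1 : k ≠ p - (r:ℤ)) (h2 : k ≠ p) : flipR r s p k = s k := by
  simp [flipR, h1, h2]

lemma edgeFlip_flipA (hr : 1 ≤ r) (h : Addable r s p) : EdgeFlip r s (flipA r s p) p :=
  ⟨h.1, h.2, flipA_left, flipA_right hr, fun j hj1 hj2 => (flipA_other hj1 hj2).symm⟩

lemma edgeFlip_eq_flipA (h : EdgeFlip r s t p) : t = flipA r s p := by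
  funext k
  rcases eq_or_ne k (p - (r:ℤ)) with rfl | h1
  · rw [flipA_left, h.2.2.1]
  rcases eq_or_ne k p with rfl | h2
  · simp [flipA, h1, h.2.2.2.1]
  · rw [flipA_other h1 h2, ← h.2.2.2.2 k h1 h2]

lemma edgeFlip_unique {k k' : ℤ} (h : EdgeFlip r s t k) (h' : EdgeFlip r s t k') : k = k' := by
  by_contra hne
  have h1 : s k ≠ t k := by rw [h.2.1, h.2.2.2.1]; omega
  have := h'.2.2.2.2 k
  have hk : k = k' - (r : ℤ) := by tauto
  subst hk
  rw [h'.2.2.1] at h1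
  exact h1 (by rw [h.2.1])

lemma flipR_flipA (hr : 1 ≤ r) (h : Addable r s p) : flipR r (flipA r s p) p = s := by
  funext k
  rcases eq_or_ne k (p - (r:ℤ)) with rfl | h1
  · rw [flipR_left, h.1]
  rcases eq_or_ne k p with rfl | h2
  · rw [flipR_right hr, h.2]
  · rw [flipR_other h1 h2, flipA_other h1 h2]

lemma flipA_flipR (hr : 1 ≤ r) (h : Removable r s p) : flipA r (flipR r s p) p = s := by
  funext k
  rcases eq_or_ne k (p - (r:ℤ)) with rfl | h1
  · rw [flipA_left, h.1]
  rcases eq_or_ne k p with rfl | h2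
  · rw [flipA_right hr, h.2]
  · rw [flipA_other h1 h2, flipR_other h1 h2]

lemma removable_flipA (hr : 1 ≤ r) : Removable r (flipA r s p) p :=
  ⟨flipA_left, flipA_right hr⟩

lemma addable_flipR (hr : 1 ≤ r) : Addable r (flipR r s p) p :=
  ⟨flipR_left, flipR_right hr⟩

/-! ### Beta sequences and partitions -/

def IsBeta (β : ℕ → ℤ) : Prop := StrictAnti β ∧ ∃ N : ℕ, ∀ j, N ≤ j → β j = -(j:ℤ) - 1

noncomputable def seqOf (β : ℕ → ℤ) : ℤ → ℕ := fun k => if k ∈ Set.range β then 1 else 0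

noncomputable def partOf (β : ℕ → ℤ) : ℕ → ℕ := fun j => (β j + j + 1).toNat

lemma strictAnti_int_le {β : ℕ → ℤ} (hβ : StrictAnti β) {a b : ℕ} (h : a ≤ b) :
    β b + ((b : ℤ) - a) ≤ β a := by
  obtain ⟨d, rfl⟩ := Nat.exists_eq_add_of_le h
  induction d with
  | zero => simp
  | succ m ih =>
    have h1 : β (a + m + 1) < β (a + m) := hβ (by omega)
    have := ih (by omega)
    have he : a + (m + 1) = a + m + 1 := by omega
    rw [he]
    push_cast at *
    omega

lemma IsBeta.lb {β : ℕ → ℤ} (hβ : IsBeta β) (j : ℕ) : -(j:ℤ) - 1 ≤ β j := by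
  obtain ⟨N, hN⟩ := hβ.2
  rcases le_total N j with h | h
  · rw [hN j h]
  · have := strictAnti_int_le hβ.1 h
    rw [hN N le_rfl] at this
    omega

lemma partOf_coe {β : ℕ → ℤ} (hβ : IsBeta β) (j : ℕ) : (partOf β j : ℤ) = β j + j + 1 := by
  rw [partOf, Int.toNat_of_nonneg]
  have := hβ.lb j
  omega

lemma isPartition_partOf {β : ℕ → ℤ} (hβ : IsBeta β) : IsPartition (partOf β) := by
  constructor
  · have hstep : ∀ j : ℕ, partOf β (j + 1) ≤ partOf β j := by
      intro j
      have h1 : β (j + 1) < β j := hβ.1 (by omega)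
      have := partOf_coe hβ j
      have := partOf_coe hβ (j+1)
      have : (partOf β (j+1) : ℤ) ≤ partOf β j := by push_cast at *; omega
      exact_mod_cast this
    intro i j hij
    obtain ⟨d, rfl⟩ := Nat.exists_eq_add_of_le hij
    induction d with
    | zero => simp
    | succ m ih => exact le_trans (hstep (i + m)) (ih (by omega))
  · obtain ⟨N, hN⟩ := hβ.2
    exact ⟨N, fun j hj => by simp [partOf, hN j hj]; omega⟩

lemma edgeSeq_partOf {β : ℕ → ℤ} (hβ : IsBeta β) : edgeSeq (partOf β) = seqOf β := by
  funext k
  rw [edgeSeq, seqOf]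
  congr 1
  simp only [Set.mem_range, eq_iff_iff]
  constructor
  · rintro ⟨j, hj⟩; exact ⟨j, by rw [← hj, partOf_coe hβ]; ring⟩
  · rintro ⟨j, hj⟩; exact ⟨j, by rw [partOf_coe hβ, hj]; ring⟩

def betaOf (f : ℕ → ℕ) : ℕ → ℤ := fun j => (f j : ℤ) - j - 1

lemma isBeta_betaOf {f : ℕ → ℕ} (hf : IsPartition f) : IsBeta (betaOf f) := by
  constructor
  · apply strictAnti_nat_of_succ_lt
    intro j
    have := hf.1 j (j+1) (by omega)
    simp only [betaOf]
    push_cast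
    omega
  · obtain ⟨N, hN⟩ := hf.2
    exact ⟨N, fun j hj => by simp [betaOf, hN j hj]⟩

lemma partOf_betaOf {f : ℕ → ℕ} : partOf (betaOf f) = f := by
  funext j; simp only [partOf, betaOf]; omega

lemma edgeSeq_eq_seqOf {f : ℕ → ℕ} (hf : IsPartition f) : edgeSeq f = seqOf (betaOf f) := by
  rw [← partOf_betaOf (f := f), edgeSeq_partOf (isBeta_betaOf hf), partOf_betaOf]

lemma strictAnti_range_eq {β β' : ℕ → ℤ} (hβ : StrictAnti β) (hβ' : StrictAnti β')
    (h : Set.range β = Set.range β') : β = β' := by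
  have key : ∀ j, β j = β' j := by
    intro j
    induction j using Nat.strong_induction_on with
    | _ j ih =>
      have h1 : ∀ g g' : ℕ → ℤ, StrictAnti g → StrictAnti g' → Set.range g = Set.range g' →
          (∀ i, i < j → g i = g' i) → g j ≤ g' j := by
        intro g g' hg hg' hr hih
        have : g j ∈ Set.range g' := by rw [← hr]; exact ⟨j, rfl⟩
        obtain ⟨m, hm⟩ := this
        have hmj : j ≤ m := by
          by_contra hc
          push_neg at hc
          have : g' m = g m := (hih m hc).symm
          rw [this] at hm
          have := hg.injective hm
          omega
        rw [← hm]
        exact hg'.antitone hmj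
      have h2 := h1 β β' hβ hβ' h ih
      have h3 := h1 β' β hβ' hβ h.symm (fun i hi => (ih i hi).symm)
      omega
  funext j; exact key j

lemma seqOf_inj {β β' : ℕ → ℤ} (hβ : StrictAnti β) (hβ' : StrictAnti β')
    (h : seqOf β = seqOf β') : β = β' := by
  apply strictAnti_range_eq hβ hβ'
  ext k
  have := congrFun h k
  simp only [seqOf] at this
  by_cases h1 : k ∈ Set.range β <;> by_cases h2 : k ∈ Set.range β' <;>
    simp [h1, h2] at this ⊢

lemma edgeSeq_inj {f g : ℕ → ℕ} (hf : IsPartition f) (hg : IsPartition g)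
    (h : edgeSeq f = edgeSeq g) : f = g := by
  rw [edgeSeq_eq_seqOf hf, edgeSeq_eq_seqOf hg] at h
  have := seqOf_inj (isBeta_betaOf hf).1 (isBeta_betaOf hg).1 h
  rw [← partOf_betaOf (f := f), this, partOf_betaOf]

end SP
namespace SP

open Polynomial

variable {r : ℕ} {s t : ℤ → ℕ} {p k : ℤ}

/-! ### The class of edge sequences -/

def InE (s : ℤ → ℕ) : Prop := ∃ β : ℕ → ℤ, IsBeta β ∧ s = seqOf β

lemma inE_edgeSeq {f : ℕ → ℕ} (hf : IsPartition f) : InE (edgeSeq f) :=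
  ⟨betaOf f, isBeta_betaOf hf, edgeSeq_eq_seqOf hf⟩

/-- Tameness: 0/1 valued, eventually 1 to the left, eventually 0 to the right. -/
def Tame (s : ℤ → ℕ) : Prop :=
  (∀ k, s k ≤ 1) ∧ (∃ a : ℤ, ∀ k ≤ a, s k = 1) ∧ (∃ b : ℤ, ∀ k, b ≤ k → s k = 0)

lemma seqOf_eq_one_iff {β : ℕ → ℤ} : seqOf β k = 1 ↔ k ∈ Set.range β := by
  rw [seqOf]; split <;> simp_all

lemma seqOf_eq_zero_iff {β : ℕ → ℤ} : seqOf β k = 0 ↔ k ∉ Set.range β := by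
  rw [seqOf]; split <;> simp_all

lemma InE.tame (hs : InE s) : Tame s := by
  obtain ⟨β, hβ, rfl⟩ := hs
  obtain ⟨N, hN⟩ := hβ.2
  refine ⟨fun k => by rw [seqOf]; split <;> omega, ⟨-(N:ℤ) - 1, fun k hk => ?_⟩,
    ⟨β 0 + 1, fun k hk => ?_⟩⟩
  · rw [seqOf_eq_one_iff]
    refine ⟨(-k - 1).toNat, ?_⟩
    have h1 : (((-k - 1).toNat : ℤ)) = -k - 1 := Int.toNat_of_nonneg (by omega)
    have h2 : N ≤ (-k - 1).toNat := by omega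
    rw [hN _ h2, h1]; ring
  · rw [seqOf_eq_zero_iff]
    rintro ⟨j, rfl⟩
    have := hβ.1.antitone (Nat.zero_le j)
    omega

lemma Tame.flipA (hr : 1 ≤ r) (hs : Tame s) (h : Addable r s p) : Tame (flipA r s p) := by
  obtain ⟨hb, ⟨a, ha⟩, ⟨b, hbb⟩⟩ := hs
  refine ⟨fun k => ?_, ⟨min a (p - (r:ℤ) - 1), fun k hk => ?_⟩,
    ⟨max b (p + 1), fun k hk => ?_⟩⟩
  · simp only [SP.flipA]; split
    · omega
    split
    · omega
    · exact hb k
  · rw [flipA_other (by omega) ?_]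
    · exact ha k (by omega)
    · intro h2
      subst h2
      exact absurd (ha k (by omega)) (by rw [h.2]; omega)
  · rw [flipA_other (by omega) (by omega)]
    exact hbb k (by omega)

lemma Tame.flipR (hr : 1 ≤ r) (hs : Tame s) (h : Removable r s p) : Tame (flipR r s p) := by
  obtain ⟨hb, ⟨a, ha⟩, ⟨b, hbb⟩⟩ := hs
  refine ⟨fun k => ?_, ⟨min a (p - (r:ℤ) - 1), fun k hk => ?_⟩,
    ⟨max b (p + 1), fun k hk => ?_⟩⟩
  · simp only [SP.flipR]; split
    · omega
    split
    · omega
    · exact hb k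
  · rw [flipR_other (by omega) ?_]
    · exact ha k (by omega)
    · intro h2
      subst h2
      exact absurd (ha k (by omega)) (by rw [h.2]; omega)
  · rw [flipR_other (by omega) (by omega)]
    exact hbb k (by omega)

/-! ### Closure of `InE` under adding a ribbon -/

lemma InE.flipA (hr : 1 ≤ r) (hs : InE s) (h : Addable r s p) : InE (flipA r s p) := by
  obtain ⟨β, hβ, rfl⟩ := hs
  have hrange1 : p - (r:ℤ) ∈ Set.range β := seqOf_eq_one_iff.mp h.1
  have hrange0 : p ∉ Set.range β := seqOf_eq_zero_iff.mp h.2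
  obtain ⟨m, hm⟩ := hrange1
  have hr1 : (1:ℤ) ≤ (r:ℤ) := by exact_mod_cast hr
  -- least index with β < p
  have hex : ∃ j, β j < p := ⟨m, by omega⟩
  classical
  set m' := Nat.find hex with hm'def
  have hm'spec : β m' < p := Nat.find_spec hex
  have hm'min : ∀ j < m', ¬ β j < p := fun j hj => Nat.find_min hex hj
  have hgt : ∀ j < m', p < β j := by
    intro j hj
    have h1 := hm'min j hj
    have h2 : β j ≠ p := fun hc => hrange0 ⟨j, hc⟩
    omega
  have hm'm : m' ≤ m := by
    by_contra hc
    push_neg at hc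
    have := hgt m hc
    have : (1:ℤ) ≤ (r:ℤ) := by exact_mod_cast hr
    omega
  set β' : ℕ → ℤ := fun j => if j < m' then β j else if j = m' then p
    else if j ≤ m then β (j - 1) else β j with hβ'def
  have hβ'lt : ∀ j < m', β' j = β j := by intro j hj; simp [hβ'def, hj]
  have hβ'm' : β' m' = p := by simp [hβ'def]
  have hβ'mid : ∀ j, m' < j → j ≤ m → β' j = β (j - 1) := by
    intro j h1 h2
    simp [hβ'def, Nat.lt_asymm h1, Nat.ne_of_gt h1, h2]
  have hβ'gt : ∀ j, m < j → β' j = β j := by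
    intro j hj
    have h1 : ¬ j < m' := by omega
    have h2 : j ≠ m' := by omega
    have h3 : ¬ j ≤ m := by omega
    simp [hβ'def, h1, h2, h3]
  have hanti : StrictAnti β' := by
    apply strictAnti_nat_of_succ_lt
    intro j
    rcases lt_trichotomy (j+1) m' with hc | hc | hc
    · rw [hβ'lt _ hc, hβ'lt _ (by omega)]
      exact hβ.1 (by omega)
    · rw [hc, hβ'm', hβ'lt _ (by omega)]
      exact hgt j (by omega)
    · -- j + 1 > m'
      rcases Nat.lt_or_ge m (j+1) with hc2 | hc2
      · -- j + 1 > m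
        rw [hβ'gt _ hc2]
        rcases Nat.lt_or_ge m j with hc3 | hc3
        · rw [hβ'gt _ hc3]; exact hβ.1 (by omega)
        · have hjm : j = m := by omega
          subst hjm
          rcases Nat.lt_or_ge j m' with hc4 | hc4
          · omega
          rcases Nat.eq_or_lt_of_le hc4 with hc5 | hc5
          · have hj9 : β' j = p := by rw [hc5] at hβ'm'; exact hβ'm'
            rw [hj9]
            have h8 : β (j+1) < β j := hβ.1 (by omega)
            omega
          · rw [hβ'mid j hc5 le_rfl]
            exact hβ.1 (by omega)
      · -- m' < j+1 ≤ m
        rw [hβ'mid _ hc hc2]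
        rcases Nat.eq_or_lt_of_le (Nat.succ_le_of_lt hc) with hc3 | hc3
        · -- j + 1 = m' + 1, i.e. j = m'
          have h7 : j = m' := by omega
          rw [h7, hβ'm']
          simpa using hm'spec
        · have hj1 : m' < j := by omega
          rw [hβ'mid j hj1 (by omega)]
          have : j - 1 < j + 1 - 1 := by omega
          exact hβ.1 this
  have hbeta' : IsBeta β' := by
    refine ⟨hanti, ?_⟩
    obtain ⟨N, hN⟩ := hβ.2
    exact ⟨max N (m+1), fun j hj => by
      rw [hβ'gt _ (by omega)]; exact hN j (by omega)⟩
  refine ⟨β', hbeta', ?_⟩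
  have hrange : ∀ k : ℤ, k ∈ Set.range β' ↔ (k ∈ Set.range β ∧ k ≠ p - (r:ℤ)) ∨ k = p := by
    intro k
    constructor
    · rintro ⟨j, rfl⟩
      rcases Nat.lt_or_ge j m' with hc | hc
      · rw [hβ'lt _ hc]
        have := hgt j hc
        left
        refine ⟨⟨j, rfl⟩, ?_⟩
        have : (1:ℤ) ≤ (r:ℤ) := by exact_mod_cast hr
        omega
      rcases Nat.eq_or_lt_of_le hc with hc1 | hc1
      · rw [← hc1, hβ'm']; right; rfl
      rcases le_or_gt j m with hc2 | hc2
      · rw [hβ'mid _ hc1 hc2]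
        left
        refine ⟨⟨j - 1, rfl⟩, fun hc3 => ?_⟩
        rw [← hm] at hc3
        have := hβ.1.injective hc3
        omega
      · rw [hβ'gt _ hc2]
        left
        refine ⟨⟨j, rfl⟩, fun hc3 => ?_⟩
        rw [← hm] at hc3
        have := hβ.1.injective hc3
        omega
    · rintro (⟨⟨j, rfl⟩, hne⟩ | rfl)
      · have hjm : j ≠ m := fun hc => hne (by rw [hc, hm])
        rcases Nat.lt_or_ge j m' with hc | hc
        · exact ⟨j, hβ'lt _ hc⟩
        rcases Nat.lt_or_ge j m with hc2 | hc2
        · exact ⟨j + 1, by rw [hβ'mid (j+1) (by omega) (by omega)]; simp⟩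
        · have : m < j := by omega
          exact ⟨j, hβ'gt _ this⟩
      · exact ⟨m', hβ'm'⟩
  funext k
  rcases eq_or_ne k (p - (r:ℤ)) with rfl | h1
  · rw [flipA_left, eq_comm, seqOf_eq_zero_iff, hrange]
    have : (1:ℤ) ≤ (r:ℤ) := by exact_mod_cast hr
    push_neg
    refine ⟨fun _ => rfl, by omega⟩
  rcases eq_or_ne k p with rfl | h2
  · rw [flipA_right hr, eq_comm, seqOf_eq_one_iff, hrange]
    right; rfl
  · rw [flipA_other h1 h2]
    have hiff : k ∈ Set.range β ↔ k ∈ Set.range β' := by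
      rw [hrange]; tauto
    rw [seqOf, seqOf, if_congr hiff rfl rfl]

end SP
namespace SP

open Polynomial

variable {r : ℕ} {s t u v : ℤ → ℕ} {p p' k : ℤ}

/-! ### Finite sets of addable/removable positions -/

lemma Tame.addable_finite (hs : Tame s) : {p : ℤ | Addable r s p}.Finite := by
  obtain ⟨_, ⟨a, ha⟩, ⟨b, hb⟩⟩ := hs
  apply Set.Finite.subset (Set.finite_Icc (a + 1) (b + (r:ℤ)))
  rintro p ⟨h1, h2⟩
  constructor
  · by_contra hc
    rw [ha p (by omega)] at h2
    omega
  · by_contra hc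
    rw [hb (p - (r:ℤ)) (by omega)] at h1
    omega

lemma Tame.removable_finite (hs : Tame s) : {p : ℤ | Removable r s p}.Finite := by
  obtain ⟨_, ⟨a, ha⟩, ⟨b, hb⟩⟩ := hs
  apply Set.Finite.subset (Set.finite_Icc a (b + (r:ℤ)))
  rintro p ⟨h1, h2⟩
  constructor
  · by_contra hc
    rw [ha (p - (r:ℤ)) (by omega)] at h1
    omega
  · by_contra hc
    rw [hb p (by omega)] at h2
    omega

open Classical in
noncomputable def addF (r : ℕ) (s : ℤ → ℕ) : Finset ℤ :=
  if h : {p : ℤ | Addable r s p}.Finite then h.toFinset else ∅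

open Classical in
noncomputable def remF (r : ℕ) (s : ℤ → ℕ) : Finset ℤ :=
  if h : {p : ℤ | Removable r s p}.Finite then h.toFinset else ∅

lemma mem_addF (hs : Tame s) : p ∈ addF r s ↔ Addable r s p := by
  rw [addF, dif_pos hs.addable_finite, Set.Finite.mem_toFinset]
  rfl

lemma mem_remF (hs : Tame s) : p ∈ remF r s ↔ Removable r s p := by
  rw [remF, dif_pos hs.removable_finite, Set.Finite.mem_toFinset]
  rfl

/-! ### Window lemmas for heights -/

/-- Heights only depend on the interior of the window. -/
lemma hgtAt_congr (h : ∀ k, p - (r:ℤ) < k → k < p → u k = v k) :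
    hgtAt r u p = hgtAt r v p := by
  apply Finset.sum_congr rfl
  intro j hj
  rw [Finset.mem_Ico] at hj
  exact h _ (by omega) (by omega)

/-- If `u` and `v` agree on the open window of `p'` except at one interior point `x`
where `u x = v x + 1`, the height goes up by one. -/
lemma hgtAt_update (hx1 : p - (r:ℤ) < k) (hx2 : k < p)
    (hval : u k = v k + 1) (hoth : ∀ m, p - (r:ℤ) < m → m < p → m ≠ k → u m = v m) :
    hgtAt r u p = hgtAt r v p + 1 := by
  have hj0 : (p - k).toNat ∈ Finset.Ico 1 r := by
    rw [Finset.mem_Ico]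
    omega
  have hk : p - ((p - k).toNat : ℤ) = k := by omega
  rw [hgtAt, hgtAt, ← Finset.add_sum_erase _ _ hj0, ← Finset.add_sum_erase _ _ hj0, hk, hval]
  have hsum : ∑ x ∈ (Finset.Ico 1 r).erase (p - k).toNat, u (p - (x:ℤ))
      = ∑ x ∈ (Finset.Ico 1 r).erase (p - k).toNat, v (p - (x:ℤ)) := by
    apply Finset.sum_congr rfl
    intro j hj
    rw [Finset.mem_erase, Finset.mem_Ico] at hj
    apply hoth <;> omega
  rw [hsum]
  ring

/-! ### The telescoping lemma -/

lemma poly_add_cancel {p q t : Polynomial ℕ} (h : p + t = q + t) : p = q := by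
  ext m
  have h2 := congrArg (fun u => Polynomial.coeff u m) h
  simp only [Polynomial.coeff_add] at h2
  omega

/-- Number of ones in the closed-left window `[p-r, p-1]`. -/
noncomputable def winW (r : ℕ) (s : ℤ → ℕ) (p : ℤ) : ℕ := ∑ k ∈ Finset.Ico (p - (r:ℤ)) p, s k

noncomputable def phiW (r : ℕ) (s : ℤ → ℕ) (p : ℤ) : Polynomial ℕ :=
  ∑ i ∈ Finset.range (winW r s p), X ^ (2 * i)

lemma hgtAt_eq_sum_Ioo : hgtAt r s p = ∑ k ∈ Finset.Ioo (p - (r:ℤ)) p, s k := by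
  rw [hgtAt]
  refine Finset.sum_nbij' (fun j => p - (j:ℤ)) (fun k => (p - k).toNat) ?_ ?_ ?_ ?_ ?_
  · intro j hj
    rw [Finset.mem_Ico] at hj
    rw [Finset.mem_Ioo]
    omega
  · intro k hk
    rw [Finset.mem_Ioo] at hk
    rw [Finset.mem_Ico]
    omega
  · intro j hj
    rw [Finset.mem_Ico] at hj
    omega
  · intro k hk
    rw [Finset.mem_Ioo] at hk
    omega
  · intro j hj
    rfl

lemma winW_left (hr : 1 ≤ r) : winW r s p = s (p - (r:ℤ)) + hgtAt r s p := by
  rw [winW, hgtAt_eq_sum_Ioo, ← Finset.sum_insert (by simp), Finset.Ioo_insert_left]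
  have : (1:ℤ) ≤ (r:ℤ) := by exact_mod_cast hr
  omega

lemma winW_right (hr : 1 ≤ r) : winW r s (p + 1) = s p + hgtAt r s p := by
  rw [winW, hgtAt_eq_sum_Ioo]
  have h1 : Finset.Ico (p + 1 - (r:ℤ)) (p + 1) = insert p (Finset.Ioo (p - (r:ℤ)) p) := by
    ext k
    simp only [Finset.mem_Ico, Finset.mem_insert, Finset.mem_Ioo]
    have : (1:ℤ) ≤ (r:ℤ) := by exact_mod_cast hr
    omega
  rw [h1, Finset.sum_insert (by simp)]

/-- The local step of the telescoping argument. -/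
lemma tele_step (hr : 1 ≤ r) (hbit : ∀ k, s k ≤ 1) (p : ℤ) :
    (if Addable r s p then (X : Polynomial ℕ) ^ (2 * hgtAt r s p) else 0) + phiW r s (p + 1)
    = (if Removable r s p then (X : Polynomial ℕ) ^ (2 * hgtAt r s p) else 0) + phiW r s p := by
  have hL := winW_left (s := s) (p := p) hr
  have hR := winW_right (s := s) (p := p) hr
  have h1 := hbit (p - (r:ℤ))
  have h2 := hbit p
  rcases Nat.le_one_iff_eq_zero_or_eq_one.mp h1 with ha | ha <;>
    rcases Nat.le_one_iff_eq_zero_or_eq_one.mp h2 with hb | hb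
  · -- (0,0): neither addable nor removable
    rw [if_neg (fun hc => by rw [hc.1] at ha; omega),
        if_neg (fun hc => by rw [hc.2] at hb; omega)]
    rw [phiW, phiW, hL, hR, ha, hb]
  · -- (0,1): removable
    rw [if_neg (fun hc => by rw [hc.1] at ha; omega), if_pos ⟨ha, hb⟩]
    rw [phiW, phiW, hL, hR, ha, hb]
    simp only [Nat.zero_add, Nat.add_comm 1, Finset.sum_range_succ]
    ring
  · -- (1,0): addable
    rw [if_pos ⟨ha, hb⟩, if_neg (fun hc => by rw [hc.2] at hb; omega)]
    rw [phiW, phiW, hL, hR, ha, hb]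
    simp only [Nat.zero_add, Nat.add_comm 1, Finset.sum_range_succ]
    ring
  · -- (1,1)
    rw [if_neg (fun hc => by rw [hc.2] at hb; omega),
        if_neg (fun hc => by rw [hc.1] at ha; omega)]
    rw [phiW, phiW, hL, hR, ha, hb]

lemma tele_sum (hr : 1 ≤ r) (hbit : ∀ k, s k ≤ 1) (A : ℤ) :
    ∀ B : ℤ, A - 1 ≤ B →
    (∑ p ∈ Finset.Icc A B, if Addable r s p then (X : Polynomial ℕ) ^ (2 * hgtAt r s p) else 0)
      + phiW r s (B + 1)
    = (∑ p ∈ Finset.Icc A B, if Removable r s p then (X : Polynomial ℕ) ^ (2 * hgtAt r s p) else 0)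
      + phiW r s A := by
  refine Int.le_induction ?_ ?_
  · have he : Finset.Icc A (A - 1) = ∅ := Finset.Icc_eq_empty (by omega)
    have h9 : A - 1 + 1 = A := by omega
    rw [he, h9]
    simp
  · intro B hB ih
    have hAB : A ≤ B + 1 := by omega
    have hins : Finset.Icc A (B + 1) = insert (B + 1) (Finset.Icc A B) := by
      ext k
      simp only [Finset.mem_Icc, Finset.mem_insert]
      omega
    have hnm : (B + 1) ∉ Finset.Icc A B := by
      simp only [Finset.mem_Icc]
      omega
    rw [hins, Finset.sum_insert hnm, Finset.sum_insert hnm]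
    have step := tele_step (s := s) hr hbit (B + 1)
    set tA := (if Addable r s (B+1) then (X:Polynomial ℕ) ^ (2 * hgtAt r s (B+1)) else 0)
    set tR := (if Removable r s (B+1) then (X:Polynomial ℕ) ^ (2 * hgtAt r s (B+1)) else 0)
    set SA := ∑ p ∈ Finset.Icc A B, if Addable r s p then (X:Polynomial ℕ) ^ (2 * hgtAt r s p) else 0
    set SR := ∑ p ∈ Finset.Icc A B, if Removable r s p then (X:Polynomial ℕ) ^ (2 * hgtAt r s p) else 0
    have key : ((tA + SA) + phiW r s (B + 1 + 1)) + phiW r s (B + 1)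
        = ((tR + SR) + phiW r s A) + phiW r s (B + 1) := by
      calc ((tA + SA) + phiW r s (B + 1 + 1)) + phiW r s (B + 1)
          = (tA + phiW r s (B + 1 + 1)) + (SA + phiW r s (B + 1)) := by ring
        _ = (tR + phiW r s (B + 1)) + (SR + phiW r s A) := by rw [step, ih]
        _ = ((tR + SR) + phiW r s A) + phiW r s (B + 1) := by ring
    exact poly_add_cancel key

/-- The key "q-differential" identity. -/
lemma telescope (hr : 1 ≤ r) (hs : Tame s) :
    (∑ p ∈ addF r s, (X : Polynomial ℕ) ^ (2 * hgtAt r s p))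
    = (∑ p ∈ remF r s, (X : Polynomial ℕ) ^ (2 * hgtAt r s p))
      + ∑ i ∈ Finset.range r, (X : Polynomial ℕ) ^ (2 * i) := by
  classical
  obtain ⟨hbit, ⟨a0, ha0⟩, ⟨b0, hb0⟩⟩ := hs
  set a := min a0 b0 with hadef
  have ha : ∀ k ≤ a, s k = 1 := fun k hk => ha0 k (by omega)
  have hb : ∀ k, b0 ≤ k → s k = 0 := hb0
  set A := a with hA
  set B := b0 + (r:ℤ) - 1 with hB
  have hr1 : (1:ℤ) ≤ (r:ℤ) := by exact_mod_cast hr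
  have hab : a ≤ b0 := by omega
  -- a itself: s a = 1, s b0 = 0 so a < b0? not necessarily needed
  have hsub : ∀ p, Addable r s p → p ∈ Finset.Icc A B := by
    rintro p ⟨h1, h2⟩
    rw [Finset.mem_Icc]
    constructor
    · by_contra hc
      rw [ha p (by omega)] at h2
      omega
    · by_contra hc
      rw [hb (p - (r:ℤ)) (by omega)] at h1
      omega
  have hsub' : ∀ p, Removable r s p → p ∈ Finset.Icc A B := by
    rintro p ⟨h1, h2⟩
    rw [Finset.mem_Icc]
    constructor
    · by_contra hc
      rw [ha (p - (r:ℤ)) (by omega)] at h1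
      omega
    · by_contra hc
      rw [hb p (by omega)] at h2
      omega
  have htame : Tame s := ⟨hbit, ⟨a, ha⟩, ⟨b0, hb⟩⟩
  have haddF : addF r s = (Finset.Icc A B).filter (fun p => Addable r s p) := by
    ext p
    rw [mem_addF htame, Finset.mem_filter]
    exact ⟨fun h => ⟨hsub p h, h⟩, fun h => h.2⟩
  have hremF : remF r s = (Finset.Icc A B).filter (fun p => Removable r s p) := by
    ext p
    rw [mem_remF htame, Finset.mem_filter]
    exact ⟨fun h => ⟨hsub' p h, h⟩, fun h => h.2⟩
  have hphiA : phiW r s A = ∑ i ∈ Finset.range r, (X : Polynomial ℕ) ^ (2 * i) := by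
    rw [phiW]
    congr 1
    rw [winW]
    have : ∀ k ∈ Finset.Ico (A - (r:ℤ)) A, s k = 1 := by
      intro k hk
      rw [Finset.mem_Ico] at hk
      exact ha k (by omega)
    rw [Finset.sum_congr rfl this, Finset.sum_const, smul_eq_mul, mul_one]
    simp [hA]
  have hphiB : phiW r s (B + 1) = 0 := by
    rw [phiW]
    have : winW r s (B + 1) = 0 := by
      rw [winW]
      apply Finset.sum_eq_zero
      intro k hk
      rw [Finset.mem_Ico] at hk
      exact hb k (by omega)
    rw [this]
    simp
  have := tele_sum (s := s) hr hbit A B (by omega)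
  rw [hphiA, hphiB, add_zero] at this
  rw [haddF, hremF, Finset.sum_filter, Finset.sum_filter, this]

end SP
namespace SP

open Polynomial

variable {r : ℕ} {s t u v : ℤ → ℕ} {p q k : ℤ}

abbrev V : Type := (ℤ → ℕ) →₀ Polynomial ℕ

noncomputable def ustep (r : ℕ) (s : ℤ → ℕ) : V :=
  ∑ p ∈ addF r s, Finsupp.single (flipA r s p) ((X : Polynomial ℕ) ^ hgtAt r s p)

noncomputable def dstep (r : ℕ) (s : ℤ → ℕ) : V :=
  ∑ p ∈ remF r s, Finsupp.single (flipR r s p) ((X : Polynomial ℕ) ^ hgtAt r s p)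

noncomputable def Uop (r : ℕ) : V →ₗ[Polynomial ℕ] V :=
  Finsupp.lsum (Polynomial ℕ) fun s => LinearMap.toSpanSingleton (Polynomial ℕ) V (ustep r s)

noncomputable def Dop (r : ℕ) : V →ₗ[Polynomial ℕ] V :=
  Finsupp.lsum (Polynomial ℕ) fun s => LinearMap.toSpanSingleton (Polynomial ℕ) V (dstep r s)

lemma Uop_single (s : ℤ → ℕ) (c : Polynomial ℕ) :
    Uop r (Finsupp.single s c) = c • ustep r s := by
  rw [Uop, Finsupp.lsum_single, LinearMap.toSpanSingleton_apply]

lemma Dop_single (s : ℤ → ℕ) (c : Polynomial ℕ) :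
    Dop r (Finsupp.single s c) = c • dstep r s := by
  rw [Dop, Finsupp.lsum_single, LinearMap.toSpanSingleton_apply]

/-! ### The bilinear pairing -/

noncomputable def pairP (v w : V) : Polynomial ℕ := v.sum fun t c => c * w t

lemma pairP_single_left (a : ℤ → ℕ) (c : Polynomial ℕ) (w : V) :
    pairP (Finsupp.single a c) w = c * w a := by
  rw [pairP]
  exact Finsupp.sum_single_index (by simp)

lemma pairP_zero_left (w : V) : pairP 0 w = 0 := by
  rw [pairP, Finsupp.sum_zero_index]

lemma pairP_add_left (v1 v2 w : V) : pairP (v1 + v2) w = pairP v1 w + pairP v2 w := by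
  rw [pairP, pairP, pairP]
  exact Finsupp.sum_add_index (by simp) (by intros; rw [add_mul])

lemma pairP_smul_left (c : Polynomial ℕ) (v w : V) : pairP (c • v) w = c * pairP v w := by
  rw [pairP, pairP, Finsupp.sum_smul_index (by simp), Finsupp.mul_sum]
  exact Finsupp.sum_congr fun a _ => by ring

lemma pairP_sum_left {ι : Type*} (S : Finset ι) (f : ι → V) (w : V) :
    pairP (∑ i ∈ S, f i) w = ∑ i ∈ S, pairP (f i) w := by
  classical
  induction S using Finset.induction_on with
  | empty => simp [pairP_zero_left]
  | insert _ _ hnot ih =>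
    rw [Finset.sum_insert hnot, Finset.sum_insert hnot, pairP_add_left, ih]

lemma pairP_smul_right (c : Polynomial ℕ) (v w : V) : pairP v (c • w) = c * pairP v w := by
  rw [pairP, pairP, Finsupp.mul_sum]
  exact Finsupp.sum_congr fun a _ => by
    rw [Finsupp.smul_apply, smul_eq_mul]
    ring

/-! ### Height stability lemmas -/

lemma hgtAt_flipA_self : hgtAt r (flipA r s p) p = hgtAt r s p :=
  hgtAt_congr fun m h1 h2 => flipA_other (by omega) (by omega)

lemma hgtAt_flipR_self : hgtAt r (flipR r s p) p = hgtAt r s p :=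
  hgtAt_congr fun m h1 h2 => flipR_other (by omega) (by omega)

/-! ### Adjointness on basis elements -/

lemma adj_filter_eq (hr : 1 ≤ r) (hs : Tame s) (ht : Tame t) :
    (addF r s).filter (fun p => flipA r s p = t)
      = (remF r t).filter (fun p => flipR r t p = s) := by
  ext p
  rw [Finset.mem_filter, Finset.mem_filter, mem_addF hs, mem_remF ht]
  constructor
  · rintro ⟨hp, rfl⟩
    exact ⟨removable_flipA hr, flipR_flipA hr hp⟩
  · rintro ⟨hp, rfl⟩
    exact ⟨addable_flipR hr, flipA_flipR hr hp⟩

lemma adj_single (hr : 1 ≤ r) (hs : Tame s) (ht : Tame t) (c d : Polynomial ℕ) :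
    pairP (Uop r (Finsupp.single s c)) (Finsupp.single t d)
      = pairP (Finsupp.single s c) (Dop r (Finsupp.single t d)) := by
  classical
  rw [Uop_single, Dop_single, pairP_smul_left, pairP_single_left, ustep, pairP_sum_left]
  rw [Finsupp.smul_apply, dstep, Finsupp.finset_sum_apply, smul_eq_mul]
  have hL : ∀ p ∈ addF r s,
      pairP (Finsupp.single (flipA r s p) ((X:Polynomial ℕ) ^ hgtAt r s p)) (Finsupp.single t d)
      = if flipA r s p = t then (X:Polynomial ℕ) ^ hgtAt r s p * d else 0 := by
    intro p _
    rw [pairP_single_left, Finsupp.single_apply]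
    rcases eq_or_ne (flipA r s p) t with h | h
    · simp [h]
    · simp [h, Ne.symm h]
  have hR : ∀ p ∈ remF r t,
      (Finsupp.single (flipR r t p) ((X:Polynomial ℕ) ^ hgtAt r t p)) s
      = if flipR r t p = s then (X:Polynomial ℕ) ^ hgtAt r t p else 0 := by
    intro p _
    rw [Finsupp.single_apply]
  rw [Finset.sum_congr rfl hL, Finset.sum_congr rfl hR]
  rw [← Finset.sum_filter, ← Finset.sum_filter, adj_filter_eq hr hs ht]
  simp only [Finset.mul_sum]
  apply Finset.sum_congr rfl
  intro p hp
  rw [Finset.mem_filter, mem_remF ht] at hp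
  have hht : hgtAt r s p = hgtAt r t p := by
    rw [← hp.2, hgtAt_flipR_self]
  rw [hht]
  ring

/-! ### Structure of flips of flips -/

lemma remF_flipA (hr : 1 ≤ r) (hs : Tame s) (hp : Addable r s p) :
    remF r (flipA r s p) = insert p (((remF r s).erase (p - (r:ℤ))).erase (p + (r:ℤ))) := by
  have hr1 : (1:ℤ) ≤ (r:ℤ) := by exact_mod_cast hr
  ext q
  rw [mem_remF (hs.flipA hr hp), Finset.mem_insert, Finset.mem_erase, Finset.mem_erase,
    mem_remF hs]
  constructor
  · intro hq
    obtain ⟨hqA, hqB⟩ := hq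
    rcases eq_or_ne q p with rfl | hqp
    · exact Or.inl rfl
    right
    have hq1 : q ≠ p + (r:ℤ) := by
      intro hc
      subst hc
      have h5 : p + (r:ℤ) - (r:ℤ) = p := by ring
      rw [h5, flipA_right hr] at hqA
      omega
    have hq2 : q ≠ p - (r:ℤ) := by
      intro hc
      subst hc
      rw [flipA_left] at hqB
      omega
    refine ⟨hq1, hq2, ?_, ?_⟩
    · rw [← flipA_other (r := r) (s := s) (p := p) (k := q - (r:ℤ)) (by omega) (by omega)]
      exact hqA
    · rw [← flipA_other (r := r) (s := s) (p := p) (k := q) hq2 hqp]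
      exact hqB
  · rintro (rfl | ⟨hq1, hq2, hq3, hq4⟩)
    · exact removable_flipA hr
    have hqp : q ≠ p := by
      intro hc
      rw [hc, hp.2] at hq4
      omega
    constructor
    · rw [flipA_other (by omega) (by omega)]
      exact hq3
    · rw [flipA_other hq2 hqp]
      exact hq4

lemma addF_flipR (hr : 1 ≤ r) (hs : Tame s) (hq : Removable r s q) :
    addF r (flipR r s q) = insert q (((addF r s).erase (q - (r:ℤ))).erase (q + (r:ℤ))) := by
  have hr1 : (1:ℤ) ≤ (r:ℤ) := by exact_mod_cast hr
  ext p
  rw [mem_addF (hs.flipR hr hq), Finset.mem_insert, Finset.mem_erase, Finset.mem_erase,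
    mem_addF hs]
  constructor
  · intro hp
    obtain ⟨hpA, hpB⟩ := hp
    rcases eq_or_ne p q with rfl | hpq
    · exact Or.inl rfl
    right
    have hp1 : p ≠ q + (r:ℤ) := by
      intro hc
      subst hc
      have h5 : q + (r:ℤ) - (r:ℤ) = q := by ring
      rw [h5, flipR_right hr] at hpA
      omega
    have hp2 : p ≠ q - (r:ℤ) := by
      intro hc
      subst hc
      rw [flipR_left] at hpB
      omega
    refine ⟨hp1, hp2, ?_, ?_⟩
    · rw [← flipR_other (r := r) (s := s) (p := q) (k := p - (r:ℤ)) (by omega) (by omega)]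
      exact hpA
    · rw [← flipR_other (r := r) (s := s) (p := q) (k := p) hp2 hpq]
      exact hpB
  · rintro (rfl | ⟨hp1, hp2, hp3, hp4⟩)
    · exact addable_flipR hr
    have hpq : p ≠ q := by
      intro hc
      rw [hc, hq.2] at hp4
      omega
    constructor
    · rw [flipR_other (by omega) (by omega)]
      exact hp3
    · rw [flipR_other hp2 hpq]
      exact hp4

lemma sum_erase_erase {M : Type*} [AddCommMonoid M] (B : Finset ℤ) (x y : ℤ) (f : ℤ → M) :
    ∑ q ∈ (B.erase x).erase y, f q = ∑ q ∈ B, (if q ≠ x ∧ q ≠ y then f q else 0) := by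
  classical
  rw [← Finset.sum_filter]
  apply Finset.sum_congr _ (fun _ _ => rfl)
  ext q
  simp only [Finset.mem_erase, Finset.mem_filter]
  tauto

end SP
namespace SP

open Polynomial

variable {r : ℕ} {s t : ℤ → ℕ} {p q k : ℤ}

/-- The two mixed flips agree when the positions are far enough apart. -/
lemma cross_seq (hr : 1 ≤ r) (hp : Addable r s p) (hq : Removable r s q)
    (h1 : q ≠ p - (r:ℤ)) (h2 : q ≠ p + (r:ℤ)) :
    flipR r (flipA r s p) q = flipA r (flipR r s q) p := by
  have hr1 : (1:ℤ) ≤ (r:ℤ) := by exact_mod_cast hr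
  have hpq : p ≠ q := by
    intro hc
    subst hc
    have h8 := hp.2
    have h9 := hq.2
    omega
  funext m
  rcases eq_or_ne m (q - (r:ℤ)) with rfl | hm1
  · rw [flipR_left, flipA_other (by omega) (by omega), flipR_left]
  rcases eq_or_ne m q with rfl | hm2
  · rw [flipR_right hr, flipA_other (by omega) (by omega), flipR_right hr]
  rcases eq_or_ne m (p - (r:ℤ)) with rfl | hm3
  · rw [flipR_other (by omega) (by omega), flipA_left, flipA_left]
  rcases eq_or_ne m p with rfl | hm4
  · rw [flipR_other (by omega) (by omega), flipA_right hr, flipA_right hr]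
  · rw [flipR_other hm1 hm2, flipA_other hm3 hm4, flipA_other hm3 hm4,
      flipR_other hm1 hm2]

/-- Exponent matching for the cross terms. -/
lemma cross_exp (hr : 1 ≤ r) (hp : Addable r s p) (hq : Removable r s q)
    (h1 : q ≠ p - (r:ℤ)) (h2 : q ≠ p + (r:ℤ)) :
    hgtAt r s p + hgtAt r (flipA r s p) q = hgtAt r s q + hgtAt r (flipR r s q) p := by
  have hr1 : (1:ℤ) ≤ (r:ℤ) := by exact_mod_cast hr
  have hpq : p ≠ q := by
    intro hc
    subst hc
    have h8 := hp.2
    have h9 := hq.2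
    omega
  by_cases hA : q - (r:ℤ) < p ∧ p < q
  · -- p inside the window of q, q - r inside the window of p
    have e1 : hgtAt r (flipA r s p) q = hgtAt r s q + 1 := by
      apply hgtAt_update (k := p) (by omega) (by omega)
      · rw [flipA_right hr, hp.2]
      · intro m hm1 hm2 hm3
        exact flipA_other (by omega) hm3
    have e2 : hgtAt r (flipR r s q) p = hgtAt r s p + 1 := by
      apply hgtAt_update (k := q - (r:ℤ)) (by omega) (by omega)
      · rw [flipR_left, hq.1]
      · intro m hm1 hm2 hm3
        exact flipR_other hm3 (by omega)
    omega
  by_cases hB : q < p ∧ p < q + (r:ℤ)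
  · have e1 : hgtAt r s q = hgtAt r (flipA r s p) q + 1 := by
      apply hgtAt_update (k := p - (r:ℤ)) (by omega) (by omega)
      · rw [flipA_left, hp.1]
      · intro m hm1 hm2 hm3
        exact (flipA_other hm3 (by omega)).symm
    have e2 : hgtAt r s p = hgtAt r (flipR r s q) p + 1 := by
      apply hgtAt_update (k := q) (by omega) (by omega)
      · rw [flipR_right hr, hq.2]
      · intro m hm1 hm2 hm3
        exact (flipR_other (by omega) hm3).symm
    omega
  · have e1 : hgtAt r (flipA r s p) q = hgtAt r s q := by
      apply hgtAt_congr
      intro m hm1 hm2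
      exact flipA_other (by omega) (by omega)
    have e2 : hgtAt r (flipR r s q) p = hgtAt r s p := by
      apply hgtAt_congr
      intro m hm1 hm2
      exact flipR_other (by omega) (by omega)
    omega

/-- Structure of `D` applied to `ustep`. -/
lemma dstep_flipA (hr : 1 ≤ r) (hs : Tame s) (hp : Addable r s p) :
    dstep r (flipA r s p) = Finsupp.single s ((X:Polynomial ℕ) ^ hgtAt r s p)
      + ∑ q ∈ remF r s, (if q ≠ p - (r:ℤ) ∧ q ≠ p + (r:ℤ) then
          Finsupp.single (flipR r (flipA r s p) q)
            ((X:Polynomial ℕ) ^ hgtAt r (flipA r s p) q) else 0) := by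
  rw [dstep, remF_flipA hr hs hp]
  have hnot : p ∉ ((remF r s).erase (p - (r:ℤ))).erase (p + (r:ℤ)) := by
    intro hc
    rw [Finset.mem_erase, Finset.mem_erase, mem_remF hs] at hc
    exact absurd hc.2.2.2 (by rw [hp.2]; omega)
  rw [Finset.sum_insert hnot, flipR_flipA hr hp, hgtAt_flipA_self, sum_erase_erase]

lemma ustep_flipR (hr : 1 ≤ r) (hs : Tame s) (hq : Removable r s q) :
    ustep r (flipR r s q) = Finsupp.single s ((X:Polynomial ℕ) ^ hgtAt r s q)
      + ∑ p ∈ addF r s, (if p ≠ q - (r:ℤ) ∧ p ≠ q + (r:ℤ) then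
          Finsupp.single (flipA r (flipR r s q) p)
            ((X:Polynomial ℕ) ^ hgtAt r (flipR r s q) p) else 0) := by
  rw [ustep, addF_flipR hr hs hq]
  have hnot : q ∉ ((addF r s).erase (q - (r:ℤ))).erase (q + (r:ℤ)) := by
    intro hc
    rw [Finset.mem_erase, Finset.mem_erase, mem_addF hs] at hc
    exact absurd hc.2.2.2 (by rw [hq.2]; omega)
  rw [Finset.sum_insert hnot, flipA_flipR hr hq, hgtAt_flipR_self, sum_erase_erase]

/-- The commutation relation on a tame basis vector. -/
lemma comm1 (hr : 1 ≤ r) (hs : Tame s) :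
    Dop r (ustep r s) = Uop r (dstep r s)
      + Finsupp.single s (∑ i ∈ Finset.range r, (X:Polynomial ℕ) ^ (2 * i)) := by
  rw [ustep, map_sum, dstep, map_sum]
  have hL : ∀ p ∈ addF r s,
      Dop r (Finsupp.single (flipA r s p) ((X:Polynomial ℕ) ^ hgtAt r s p))
      = Finsupp.single s ((X:Polynomial ℕ) ^ (2 * hgtAt r s p))
        + ∑ q ∈ remF r s, (if q ≠ p - (r:ℤ) ∧ q ≠ p + (r:ℤ) then
            Finsupp.single (flipR r (flipA r s p) q)
              ((X:Polynomial ℕ) ^ (hgtAt r s p + hgtAt r (flipA r s p) q)) else 0) := by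
    intro p hp
    rw [mem_addF hs] at hp
    rw [Dop_single, dstep_flipA hr hs hp, smul_add, Finsupp.smul_single, smul_eq_mul,
      ← pow_add, ← two_mul, Finset.smul_sum]
    congr 1
    apply Finset.sum_congr rfl
    intro q _
    split
    · rw [Finsupp.smul_single, smul_eq_mul, ← pow_add]
    · rw [smul_zero]
  have hR : ∀ q ∈ remF r s,
      Uop r (Finsupp.single (flipR r s q) ((X:Polynomial ℕ) ^ hgtAt r s q))
      = Finsupp.single s ((X:Polynomial ℕ) ^ (2 * hgtAt r s q))
        + ∑ p ∈ addF r s, (if p ≠ q - (r:ℤ) ∧ p ≠ q + (r:ℤ) then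
            Finsupp.single (flipA r (flipR r s q) p)
              ((X:Polynomial ℕ) ^ (hgtAt r s q + hgtAt r (flipR r s q) p)) else 0) := by
    intro q hq
    rw [mem_remF hs] at hq
    rw [Uop_single, ustep_flipR hr hs hq, smul_add, Finsupp.smul_single, smul_eq_mul,
      ← pow_add, ← two_mul, Finset.smul_sum]
    congr 1
    apply Finset.sum_congr rfl
    intro p _
    split
    · rw [Finsupp.smul_single, smul_eq_mul, ← pow_add]
    · rw [smul_zero]
  rw [Finset.sum_congr rfl hL, Finset.sum_congr rfl hR, Finset.sum_add_distrib,
    Finset.sum_add_distrib]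
  have hdiag : ∑ p ∈ addF r s, Finsupp.single s ((X:Polynomial ℕ) ^ (2 * hgtAt r s p))
      = (∑ q ∈ remF r s, Finsupp.single s ((X:Polynomial ℕ) ^ (2 * hgtAt r s q)))
        + Finsupp.single s (∑ i ∈ Finset.range r, (X:Polynomial ℕ) ^ (2 * i)) := by
    rw [← Finsupp.single_finset_sum, ← Finsupp.single_finset_sum, ← Finsupp.single_add]
    rw [telescope hr hs]
  have hcross : ∑ p ∈ addF r s, ∑ q ∈ remF r s,
        (if q ≠ p - (r:ℤ) ∧ q ≠ p + (r:ℤ) then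
          Finsupp.single (flipR r (flipA r s p) q)
            ((X:Polynomial ℕ) ^ (hgtAt r s p + hgtAt r (flipA r s p) q)) else 0)
      = ∑ q ∈ remF r s, ∑ p ∈ addF r s,
        (if p ≠ q - (r:ℤ) ∧ p ≠ q + (r:ℤ) then
          Finsupp.single (flipA r (flipR r s q) p)
            ((X:Polynomial ℕ) ^ (hgtAt r s q + hgtAt r (flipR r s q) p)) else 0) := by
    rw [Finset.sum_comm]
    apply Finset.sum_congr rfl
    intro q hq
    apply Finset.sum_congr rfl
    intro p hp
    rw [mem_addF hs] at hp
    rw [mem_remF hs] at hq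
    have hiff : (q ≠ p - (r:ℤ) ∧ q ≠ p + (r:ℤ)) ↔ (p ≠ q - (r:ℤ) ∧ p ≠ q + (r:ℤ)) := by
      constructor <;> (rintro ⟨a, b⟩; constructor <;> (intro hc; subst hc)) <;> omega
    by_cases hcond : q ≠ p - (r:ℤ) ∧ q ≠ p + (r:ℤ)
    · rw [if_pos hcond, if_pos (hiff.mp hcond), cross_seq hr hp hq hcond.1 hcond.2,
        cross_exp hr hp hq hcond.1 hcond.2]
    · rw [if_neg hcond, if_neg (fun hc => hcond (hiff.mpr hc))]
  rw [hdiag, hcross]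
  abel

end SP
namespace SP

open Polynomial

variable {r : ℕ} {s t s0 : ℤ → ℕ} {p q k : ℤ} {v w : V}

/-- All sequences in the support are tame. -/
def TS (v : V) : Prop := ∀ s ∈ v.support, Tame s

lemma pairP_zero_right (v : V) : pairP v 0 = 0 := by
  rw [pairP]
  simp

lemma pairP_add_right (v w1 w2 : V) : pairP v (w1 + w2) = pairP v w1 + pairP v w2 := by
  rw [pairP, pairP, pairP, ← Finsupp.sum_add]
  exact Finsupp.sum_congr fun a _ => by rw [Finsupp.add_apply, mul_add]

lemma TS_support_add {a : ℤ → ℕ} {b : Polynomial ℕ} {f : (ℤ → ℕ) →₀ Polynomial ℕ}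
    (haf : a ∉ f.support) (hb : b ≠ 0) (hv : TS (Finsupp.single a b + f)) :
    Tame a ∧ TS f := by
  have hsupp : (Finsupp.single a b + f).support = insert a f.support := by
    rw [Finsupp.support_add_eq, Finsupp.support_single_ne_zero a hb]
    · ext x; simp [or_comm]
    · rw [Finsupp.support_single_ne_zero a hb]
      simp [Finset.disjoint_singleton_left, haf]
  constructor
  · exact hv a (by rw [hsupp]; exact Finset.mem_insert_self _ _)
  · exact fun s hs => hv s (by rw [hsupp]; exact Finset.mem_insert_of_mem hs)

lemma TS_ustep (hr : 1 ≤ r) (hs : Tame s) : TS (ustep r s) := by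
  intro x hx
  rw [ustep] at hx
  have := Finsupp.support_finset_sum (s := addF r s)
    (f := fun p => Finsupp.single (flipA r s p) ((X:Polynomial ℕ) ^ hgtAt r s p)) hx
  rw [Finset.mem_biUnion] at this
  obtain ⟨p, hp, hxp⟩ := this
  have hx2 := Finsupp.support_single_subset hxp
  rw [Finset.mem_singleton] at hx2
  subst hx2
  exact hs.flipA hr ((mem_addF hs).mp hp)

lemma TS_dstep (hr : 1 ≤ r) (hs : Tame s) : TS (dstep r s) := by
  intro x hx
  rw [dstep] at hx
  have := Finsupp.support_finset_sum (s := remF r s)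
    (f := fun p => Finsupp.single (flipR r s p) ((X:Polynomial ℕ) ^ hgtAt r s p)) hx
  rw [Finset.mem_biUnion] at this
  obtain ⟨p, hp, hxp⟩ := this
  have hx2 := Finsupp.support_single_subset hxp
  rw [Finset.mem_singleton] at hx2
  subst hx2
  exact hs.flipR hr ((mem_remF hs).mp hp)

lemma TS_smul {c : Polynomial ℕ} (hv : TS v) : TS (c • v) := by
  intro x hx
  exact hv x (Finsupp.support_smul hx)

lemma TS_add (hv : TS v) (hw : TS w) : TS (v + w) := by
  intro x hx
  have := Finsupp.support_add (g₁ := v) (g₂ := w) hx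
  rw [Finset.mem_union] at this
  rcases this with h | h
  · exact hv x h
  · exact hw x h

lemma TS_zero : TS (0 : V) := by
  intro x hx
  simp at hx

lemma TS_Uop (hr : 1 ≤ r) (hv : TS v) : TS (Uop r v) := by
  have : ∀ u : V, TS u → TS (Uop r u) := by
    intro u
    induction u using Finsupp.induction with
    | zero => intro _; rw [map_zero]; exact TS_zero
    | single_add a b f haf hb ih =>
      intro hu
      obtain ⟨hta, htf⟩ := TS_support_add haf hb hu
      rw [map_add, Uop_single]
      exact TS_add (TS_smul (TS_ustep hr hta)) (ih htf)
  exact this v hv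

lemma TS_Dop (hr : 1 ≤ r) (hv : TS v) : TS (Dop r v) := by
  have : ∀ u : V, TS u → TS (Dop r u) := by
    intro u
    induction u using Finsupp.induction with
    | zero => intro _; rw [map_zero]; exact TS_zero
    | single_add a b f haf hb ih =>
      intro hu
      obtain ⟨hta, htf⟩ := TS_support_add haf hb hu
      rw [map_add, Dop_single]
      exact TS_add (TS_smul (TS_dstep hr hta)) (ih htf)
  exact this v hv

lemma TS_pow (hr : 1 ≤ r) (n : ℕ) (hv : TS v) : TS ((Uop r ^ n) v) := by
  induction n with
  | zero => simpa using hv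
  | succ m ih =>
    rw [pow_succ', Module.End.mul_apply]
    exact TS_Uop hr ih

/-- The commutation relation, extended by linearity. -/
lemma comm_ext (hr : 1 ≤ r) : ∀ v : V, TS v →
    Dop r (Uop r v) = Uop r (Dop r v)
      + (∑ i ∈ Finset.range r, (X:Polynomial ℕ) ^ (2 * i)) • v := by
  intro v
  induction v using Finsupp.induction with
  | zero => intro _; simp
  | single_add a b f haf hb ih =>
    intro hv
    obtain ⟨hta, htf⟩ := TS_support_add haf hb hv
    rw [map_add, map_add, map_add, map_add, ih htf, Uop_single, Dop_single, map_smul, map_smul,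
      comm1 hr hta, smul_add, smul_add]
    rw [Finsupp.smul_single, Finsupp.smul_single, smul_eq_mul, smul_eq_mul, mul_comm]
    abel

/-- Iterated commutation, starting from a `D`-vacuum vector. -/
lemma comm_pow (hr : 1 ≤ r) (hst : Tame s0) (hD : dstep r s0 = 0) : ∀ n : ℕ,
    Dop r ((Uop r ^ (n+1)) (Finsupp.single s0 1))
    = (((n:Polynomial ℕ) + 1) * (∑ i ∈ Finset.range r, (X:Polynomial ℕ) ^ (2 * i)))
        • ((Uop r ^ n) (Finsupp.single s0 1)) := by
  have hTS1 : TS (Finsupp.single s0 1) := by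
    intro x hx
    have := Finsupp.support_single_subset hx
    rw [Finset.mem_singleton] at this
    subst this
    exact hst
  intro n
  induction n with
  | zero =>
    rw [pow_one, pow_zero, Module.End.one_apply, comm_ext hr _ hTS1, Dop_single, hD, smul_zero,
      map_zero, zero_add]
    norm_num
  | succ m ih =>
    have h1 : (Uop r ^ (m + 1 + 1)) (Finsupp.single s0 1)
        = Uop r ((Uop r ^ (m+1)) (Finsupp.single s0 1)) := by
      rw [pow_succ', Module.End.mul_apply]
    rw [h1, comm_ext hr _ (TS_pow hr (m+1) hTS1), ih, map_smul]
    have h2 : (Uop r) ((Uop r ^ m) (Finsupp.single s0 1))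
        = (Uop r ^ (m+1)) (Finsupp.single s0 1) := by
      rw [pow_succ', Module.End.mul_apply]
    rw [h2, ← add_smul]
    congr 1
    push_cast
    ring

/-- Adjointness, extended by linearity. -/
lemma adj_ext (hr : 1 ≤ r) : ∀ v w : V, TS v → TS w →
    pairP (Uop r v) w = pairP v (Dop r w) := by
  intro v
  induction v using Finsupp.induction with
  | zero => intro w _ _; rw [map_zero, pairP_zero_left, pairP_zero_left]
  | single_add a b f haf hb ih =>
    intro w hv hw
    obtain ⟨hta, htf⟩ := TS_support_add haf hb hv
    rw [map_add, pairP_add_left, pairP_add_left, ih w htf hw]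
    congr 1
    -- single case, induction on w
    clear ih haf hb hv htf f
    induction w using Finsupp.induction with
    | zero => rw [map_zero, pairP_zero_right, pairP_zero_right]
    | single_add c d g hcg hd ihw =>
      obtain ⟨htc, htg⟩ := TS_support_add hcg hd hw
      rw [map_add, pairP_add_right, pairP_add_right, ihw htg]
      congr 1
      exact adj_single hr hta htc b d

/-- The main pairing computation:  `⟨Uⁿ γ, Uⁿ γ⟩ = n! Kⁿ`. -/
lemma pair_main (hr : 1 ≤ r) (hst : Tame s0) (hD : dstep r s0 = 0) (n : ℕ) :
    pairP ((Uop r ^ n) (Finsupp.single s0 1)) ((Uop r ^ n) (Finsupp.single s0 1))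
    = (n.factorial : Polynomial ℕ)
        * (∑ i ∈ Finset.range r, (X:Polynomial ℕ) ^ (2 * i)) ^ n := by
  have hTS1 : TS (Finsupp.single s0 1) := by
    intro x hx
    have := Finsupp.support_single_subset hx
    rw [Finset.mem_singleton] at this
    subst this
    exact hst
  induction n with
  | zero =>
    simp only [pow_zero, Module.End.one_apply, pairP_single_left]
    rw [Finsupp.single_eq_same]
    simp
  | succ m ih =>
    have h1 : (Uop r ^ (m + 1)) (Finsupp.single s0 1)
        = Uop r ((Uop r ^ m) (Finsupp.single s0 1)) := by
      rw [pow_succ', Module.End.mul_apply]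
    calc pairP ((Uop r ^ (m+1)) (Finsupp.single s0 1)) ((Uop r ^ (m+1)) (Finsupp.single s0 1))
        = pairP ((Uop r ^ m) (Finsupp.single s0 1))
            (Dop r ((Uop r ^ (m+1)) (Finsupp.single s0 1))) := by
          rw [h1]
          have := TS_pow hr (m+1) hTS1
          rw [h1] at this
          exact adj_ext hr _ _ (TS_pow hr m hTS1) this
      _ = (((m:Polynomial ℕ) + 1) * (∑ i ∈ Finset.range r, (X:Polynomial ℕ) ^ (2 * i)))
            * pairP ((Uop r ^ m) (Finsupp.single s0 1)) ((Uop r ^ m) (Finsupp.single s0 1)) := by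
          rw [comm_pow hr hst hD m, pairP_smul_right]
      _ = (Nat.factorial (m+1) : Polynomial ℕ)
            * (∑ i ∈ Finset.range r, (X:Polynomial ℕ) ^ (2 * i)) ^ (m+1) := by
          rw [ih, Nat.factorial_succ]
          push_cast
          ring

end SP
namespace SP

open Polynomial

variable {r : ℕ} {s t : ℤ → ℕ} {p q k : ℤ}

noncomputable def VL (r : ℕ) : ℕ → (ℤ → ℕ) → Finset (List ℤ)
  | 0, _ => {[]}
  | n+1, s => (addF r s).biUnion fun p => (VL r n (flipA r s p)).image (p :: ·)

def stSeq (r : ℕ) : (ℤ → ℕ) → List ℤ → (ℤ → ℕ)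
  | s, [] => s
  | s, p :: l => stSeq r (flipA r s p) l

def wtL (r : ℕ) : (ℤ → ℕ) → List ℤ → ℕ
  | _, [] => 0
  | s, p :: l => hgtAt r s p + wtL r (flipA r s p) l

def ValidL (r : ℕ) : (ℤ → ℕ) → List ℤ → Prop
  | _, [] => True
  | s, p :: l => Addable r s p ∧ ValidL r (flipA r s p) l

lemma stSeq_nil : stSeq r s [] = s := rfl
lemma stSeq_cons (l : List ℤ) : stSeq r s (p :: l) = stSeq r (flipA r s p) l := rfl
lemma wtL_nil : wtL r s [] = 0 := rfl
lemma wtL_cons (l : List ℤ) : wtL r s (p :: l) = hgtAt r s p + wtL r (flipA r s p) l := rfl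

/-- Expansion of `Uⁿ` on a basis vector as a sum over lists of flip positions. -/
lemma U_pow_single (n : ℕ) : ∀ s : ℤ → ℕ,
    (Uop r ^ n) (Finsupp.single s 1)
    = ∑ l ∈ VL r n s, Finsupp.single (stSeq r s l) ((X : Polynomial ℕ) ^ wtL r s l) := by
  induction n with
  | zero =>
    intro s
    rw [pow_zero, Module.End.one_apply, VL]
    rw [Finset.sum_singleton, stSeq_nil, wtL_nil, pow_zero]
  | succ m ih =>
    intro s
    have h1 : (Uop r ^ (m+1)) (Finsupp.single s 1)
        = (Uop r ^ m) (Uop r (Finsupp.single s 1)) := by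
      rw [pow_succ, Module.End.mul_apply]
    rw [h1, Uop_single, one_smul, ustep, map_sum]
    have h2 : ∀ p ∈ addF r s,
        (Uop r ^ m) (Finsupp.single (flipA r s p) ((X:Polynomial ℕ) ^ hgtAt r s p))
        = ∑ l ∈ VL r m (flipA r s p),
            Finsupp.single (stSeq r s (p :: l)) ((X : Polynomial ℕ) ^ wtL r s (p :: l)) := by
      intro p _
      have h3 : Finsupp.single (flipA r s p) ((X:Polynomial ℕ) ^ hgtAt r s p)
          = ((X:Polynomial ℕ) ^ hgtAt r s p) • Finsupp.single (flipA r s p) 1 := by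
        rw [Finsupp.smul_single, smul_eq_mul, mul_one]
      rw [h3, map_smul, ih (flipA r s p), Finset.smul_sum]
      apply Finset.sum_congr rfl
      intro l _
      rw [Finsupp.smul_single, smul_eq_mul, ← pow_add, stSeq_cons, wtL_cons]
    rw [Finset.sum_congr rfl h2]
    show _ = ∑ l ∈ VL r (m+1) s, _
    rw [VL]
    rw [Finset.sum_biUnion]
    · apply Finset.sum_congr rfl
      intro p _
      rw [Finset.sum_image]
      intro a _ b _ hab
      injection hab
    · intro p1 h1 p2 h2 h12
      apply Finset.disjoint_left.mpr
      intro l hl1 hl2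
      rw [Finset.mem_image] at hl1 hl2
      obtain ⟨a, _, ha⟩ := hl1
      obtain ⟨b, _, hb⟩ := hl2
      apply h12
      have h9 := ha.trans hb.symm
      rw [List.cons.injEq] at h9
      exact h9.1

/-- The pairing of `Uⁿγ` with itself as a double sum over pairs of lists. -/
lemma pair_lists (n : ℕ) (s : ℤ → ℕ) :
    pairP ((Uop r ^ n) (Finsupp.single s 1)) ((Uop r ^ n) (Finsupp.single s 1))
    = ∑ l ∈ VL r n s, ∑ l' ∈ VL r n s,
        (if stSeq r s l' = stSeq r s l
          then (X : Polynomial ℕ) ^ (wtL r s l + wtL r s l') else 0) := by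
  rw [U_pow_single n s, pairP_sum_left]
  apply Finset.sum_congr rfl
  intro l _
  rw [pairP_single_left, Finsupp.finset_sum_apply, Finset.mul_sum]
  apply Finset.sum_congr rfl
  intro l' _
  rw [Finsupp.single_apply]
  split
  · rw [← pow_add]
  · rw [mul_zero]

/-! ### Properties of lists in `VL` -/

lemma mem_VL {n : ℕ} : ∀ {s : ℤ → ℕ} {l : List ℤ}, Tame s → 1 ≤ r →
    (l ∈ VL r n s ↔ l.length = n ∧ ValidL r s l) := by
  induction n with
  | zero =>
    intro s l hs hr
    rw [VL, Finset.mem_singleton]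
    constructor
    · rintro rfl
      exact ⟨rfl, trivial⟩
    · rintro ⟨hl, _⟩
      exact List.length_eq_zero_iff.mp hl
  | succ m ih =>
    intro s l hs hr
    rw [VL, Finset.mem_biUnion]
    constructor
    · rintro ⟨p, hp, hl⟩
      rw [Finset.mem_image] at hl
      obtain ⟨t, ht, rfl⟩ := hl
      rw [mem_addF hs] at hp
      have := (ih (hs.flipA hr hp) hr).mp ht
      exact ⟨by simp [this.1], hp, this.2⟩
    · rintro ⟨hlen, hval⟩
      cases l with
      | nil => simp at hlen
      | cons p t =>
        obtain ⟨hp, hval'⟩ := hval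
        refine ⟨p, (mem_addF hs).mpr hp, ?_⟩
        rw [Finset.mem_image]
        refine ⟨t, ?_, rfl⟩
        rw [ih (hs.flipA hr hp) hr]
        exact ⟨by simpa using hlen, hval'⟩

lemma validL_take (hr : 1 ≤ r) : ∀ (l : List ℤ) (s : ℤ → ℕ), ValidL r s l →
    ∀ i : ℕ, ValidL r s (l.take i) := by
  intro l
  induction l with
  | nil => intro s _ i; rw [List.take_nil]; exact trivial
  | cons p t ih =>
    intro s hv i
    cases i with
    | zero => exact trivial
    | succ j =>
      rw [List.take_succ_cons]
      exact ⟨hv.1, ih _ hv.2 j⟩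

lemma inE_stSeq (hr : 1 ≤ r) : ∀ (l : List ℤ) (s : ℤ → ℕ), InE s → ValidL r s l →
    InE (stSeq r s l) := by
  intro l
  induction l with
  | nil => intro s hs _; exact hs
  | cons p t ih =>
    intro s hs hv
    rw [stSeq_cons]
    exact ih _ (hs.flipA hr hv.1) hv.2

lemma stSeq_take_succ : ∀ (l : List ℤ) (s : ℤ → ℕ) (i : ℕ), i < l.length →
    stSeq r s (l.take (i+1)) = flipA r (stSeq r s (l.take i)) (l.getD i 0) := by
  intro l
  induction l with
  | nil => intro s i hi; simp at hi
  | cons p t ih =>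
    intro s i hi
    cases i with
    | zero => simp [stSeq_cons, stSeq_nil]
    | succ j =>
      rw [List.take_succ_cons, List.take_succ_cons, stSeq_cons, stSeq_cons]
      have hj : j < t.length := by simpa using hi
      rw [ih _ j hj]
      rfl

lemma addable_take : ∀ (l : List ℤ) (s : ℤ → ℕ), ValidL r s l →
    ∀ i : ℕ, i < l.length → Addable r (stSeq r s (l.take i)) (l.getD i 0) := by
  intro l
  induction l with
  | nil => intro s _ i hi; simp at hi
  | cons p t ih =>
    intro s hv i hi
    cases i with
    | zero => exact hv.1
    | succ j =>
      rw [List.take_succ_cons, stSeq_cons]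
      exact ih _ hv.2 j (by simpa using hi)

lemma wtL_eq_sum : ∀ (l : List ℤ) (s : ℤ → ℕ),
    wtL r s l = ∑ i ∈ Finset.range l.length,
      hgtAt r (stSeq r s (l.take i)) (l.getD i 0) := by
  intro l
  induction l with
  | nil => intro s; simp [wtL_nil]
  | cons p t ih =>
    intro s
    rw [wtL_cons, List.length_cons, Finset.sum_range_succ', ih (flipA r s p)]
    simp only [List.take_succ_cons, List.getD_cons_succ, stSeq_cons, List.take_zero,
      List.getD_cons_zero, stSeq_nil]
    ring

lemma stSeq_inj (hr : 1 ≤ r) : ∀ (l l' : List ℤ) (s : ℤ → ℕ), ValidL r s l → ValidL r s l' →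
    l.length = l'.length → (∀ i : ℕ, stSeq r s (l.take i) = stSeq r s (l'.take i)) →
    l = l' := by
  intro l
  induction l with
  | nil =>
    intro l' s _ _ hlen _
    exact (List.length_eq_zero_iff.mp hlen.symm).symm ▸ rfl
  | cons p t ih =>
    intro l' s hv hv' hlen hst
    cases l' with
    | nil => simp at hlen
    | cons p' t' =>
      have h1 := hst 1
      simp only [List.take_succ_cons, List.take_zero, stSeq_cons, stSeq_nil] at h1
      have hpp : p = p' := by
        have hval1 : flipA r s p p = 1 := flipA_right hr
        rw [h1] at hval1
        by_contra hne
        rcases eq_or_ne p (p' - (r:ℤ)) with h2 | h2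
        · rw [h2, flipA_left] at hval1
          omega
        · rw [flipA_other h2 hne] at hval1
          rw [hv.1.2] at hval1
          omega
      subst hpp
      congr 1
      apply ih t' (flipA r s p) hv.2 hv'.2 (by simpa using hlen)
      intro i
      have := hst (i + 1)
      simpa only [List.take_succ_cons, stSeq_cons] using this

end SP
namespace SP

open Polynomial

variable {r : ℕ} {s t : ℤ → ℕ} {p q k : ℤ}

noncomputable def toPart (s : ℤ → ℕ) : ℕ → ℕ :=
  if h : InE s then partOf h.choose else 0

lemma toPart_spec (hs : InE s) : IsPartition (toPart s) ∧ edgeSeq (toPart s) = s := by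
  rw [toPart, dif_pos hs]
  have hspec := hs.choose_spec
  exact ⟨isPartition_partOf hspec.1, by rw [edgeSeq_partOf hspec.1]; exact hspec.2.symm⟩

lemma toPart_edgeSeq {f : ℕ → ℕ} (hf : IsPartition f) : toPart (edgeSeq f) = f := by
  have h1 := toPart_spec (inE_edgeSeq hf)
  exact edgeSeq_inj h1.1 hf h1.2

lemma stepHeight_eq (h : EdgeFlip r s t k) : stepHeight r s t = hgtAt r s k := by
  have hex : ∃ k, EdgeFlip r s t k := ⟨k, h⟩
  rw [stepHeight, dif_pos hex]
  congr 1
  exact edgeFlip_unique hex.choose_spec h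

noncomputable def chainOf (r n : ℕ) (γ : ℕ → ℕ) (l : List ℤ) : Fin (n+1) → ℕ → ℕ :=
  fun i => toPart (stSeq r (edgeSeq γ) (l.take i))

lemma chainOf_spec (hr : 1 ≤ r) {γ : ℕ → ℕ} (hγ : IsPartition γ) {n : ℕ} {l : List ℤ}
    (hl : l ∈ VL r n (edgeSeq γ)) :
    (∀ i : Fin (n+1), edgeSeq (chainOf r n γ l i) = stSeq r (edgeSeq γ) (l.take i))
    ∧ IsSRT r n γ (chainOf r n γ l)
    ∧ totH r n (chainOf r n γ l) = wtL r (edgeSeq γ) l := by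
  have hg : InE (edgeSeq γ) := inE_edgeSeq hγ
  have htame : Tame (edgeSeq γ) := hg.tame
  obtain ⟨hlen, hval⟩ := (mem_VL htame hr).mp hl
  have hInE : ∀ i : ℕ, InE (stSeq r (edgeSeq γ) (l.take i)) :=
    fun i => inE_stSeq hr _ _ hg (validL_take hr l _ hval i)
  have hedge : ∀ i : Fin (n+1),
      edgeSeq (chainOf r n γ l i) = stSeq r (edgeSeq γ) (l.take i) :=
    fun i => (toPart_spec (hInE i)).2
  have hflip : ∀ i : Fin n, EdgeFlip r (edgeSeq (chainOf r n γ l i.castSucc))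
      (edgeSeq (chainOf r n γ l i.succ)) (l.getD i 0) := by
    intro i
    rw [hedge i.castSucc, hedge i.succ, Fin.coe_castSucc, Fin.val_succ]
    have hi : (i : ℕ) < l.length := by rw [hlen]; exact i.isLt
    rw [stSeq_take_succ l _ i hi]
    exact edgeFlip_flipA hr (addable_take l _ hval i hi)
  refine ⟨hedge, ⟨?_, fun i => (toPart_spec (hInE i)).1, fun i => ⟨l.getD i 0, hflip i⟩⟩, ?_⟩
  · show toPart (stSeq r (edgeSeq γ) (l.take ((0 : Fin (n+1)) : ℕ))) = γ
    rw [Fin.val_zero, List.take_zero, stSeq_nil]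
    exact toPart_edgeSeq hγ
  · rw [totH]
    have hterm : ∀ i : Fin n,
        stepHeight r (edgeSeq (chainOf r n γ l i.castSucc)) (edgeSeq (chainOf r n γ l i.succ))
        = hgtAt r (stSeq r (edgeSeq γ) (l.take (i : ℕ))) (l.getD (i : ℕ) 0) := by
      intro i
      rw [stepHeight_eq (hflip i), hedge i.castSucc, Fin.coe_castSucc]
    calc ∑ i : Fin n, stepHeight r (edgeSeq (chainOf r n γ l i.castSucc))
          (edgeSeq (chainOf r n γ l i.succ))
        = ∑ i : Fin n, hgtAt r (stSeq r (edgeSeq γ) (l.take (i:ℕ))) (l.getD (i:ℕ) 0) :=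
          Finset.sum_congr rfl (fun i _ => hterm i)
      _ = ∑ i ∈ Finset.range n, hgtAt r (stSeq r (edgeSeq γ) (l.take i)) (l.getD i 0) :=
          Fin.sum_univ_eq_sum_range
            (fun i => hgtAt r (stSeq r (edgeSeq γ) (l.take i)) (l.getD i 0)) n
      _ = wtL r (edgeSeq γ) l := by rw [wtL_eq_sum l, hlen]

lemma exists_list (hr : 1 ≤ r) : ∀ (n : ℕ) (δ : ℕ → ℕ) (c : Fin (n+1) → ℕ → ℕ),
    IsSRT r n δ c →
    ∃ l ∈ VL r n (edgeSeq δ),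
      ∀ i : Fin (n+1), edgeSeq (c i) = stSeq r (edgeSeq δ) (l.take i) := by
  intro n
  induction n with
  | zero =>
    intro δ c hc
    refine ⟨[], by rw [VL]; exact Finset.mem_singleton_self _, ?_⟩
    intro i
    have hi : i = 0 := by
      have h9 := i.isLt
      ext
      simp only [Fin.val_zero]
      omega
    subst hi
    rw [hc.1]
    rfl
  | succ m ihm =>
    intro δ c hc
    obtain ⟨h0, hparts, hsteps⟩ := hc
    obtain ⟨k, hk⟩ := hsteps 0
    have hc0 : c (Fin.castSucc 0) = δ := by rw [Fin.castSucc_zero, h0]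
    have hδpart : IsPartition δ := h0 ▸ hparts 0
    have htame : Tame (edgeSeq δ) := (inE_edgeSeq hδpart).tame
    have hadd : Addable r (edgeSeq δ) k := by
      constructor
      · rw [← congrFun (congrArg edgeSeq hc0) (k - (r:ℤ))]; exact hk.1
      · rw [← congrFun (congrArg edgeSeq hc0) k]; exact hk.2.1
    have h1 : edgeSeq (c (Fin.succ 0)) = flipA r (edgeSeq δ) k := by
      rw [← (show edgeSeq (c (Fin.castSucc 0)) = edgeSeq δ from congrArg _ hc0)]
      exact edgeFlip_eq_flipA hk
    have hSRT' : IsSRT r m (c (Fin.succ 0)) (fun i : Fin (m+1) => c i.succ) := by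
      refine ⟨rfl, fun i => hparts i.succ, fun i => ?_⟩
      obtain ⟨k', hk'⟩ := hsteps i.succ
      refine ⟨k', ?_⟩
      show EdgeFlip r (edgeSeq (c i.castSucc.succ)) (edgeSeq (c i.succ.succ)) k'
      rw [Fin.succ_castSucc]
      exact hk'
    obtain ⟨l', hl'mem, hl'st⟩ := ihm (c (Fin.succ 0)) (fun i => c i.succ) hSRT'
    refine ⟨k :: l', ?_, ?_⟩
    · rw [VL, Finset.mem_biUnion]
      refine ⟨k, (mem_addF htame).mpr hadd, ?_⟩
      rw [Finset.mem_image]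
      exact ⟨l', by rw [← h1]; exact hl'mem, rfl⟩
    · intro i
      induction i using Fin.cases with
      | zero =>
        rw [h0]
        rfl
      | succ j =>
        have hj := hl'st j
        rw [Fin.val_succ, List.take_succ_cons, stSeq_cons, ← h1]
        exact hj

end SP
namespace SP

open Polynomial

noncomputable def phiX2 : Polynomial ℕ →+* Polynomial ℕ :=
  Polynomial.eval₂RingHom Polynomial.C ((X : Polynomial ℕ) ^ 2)

lemma phiX2_monomial (i : ℕ) (a : ℕ) :
    phiX2 (Polynomial.monomial i a) = Polynomial.C a * (X : Polynomial ℕ) ^ (2 * i) := by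
  rw [phiX2, coe_eval₂RingHom, Polynomial.eval₂_monomial, ← pow_mul]

lemma coeff_phiX2_even (Q : Polynomial ℕ) (m : ℕ) : (phiX2 Q).coeff (2 * m) = Q.coeff m := by
  induction Q using Polynomial.induction_on' with
  | add p q hp hq => rw [map_add, Polynomial.coeff_add, Polynomial.coeff_add, hp, hq]
  | monomial i a =>
    rw [phiX2_monomial, Polynomial.coeff_C_mul, Polynomial.coeff_X_pow,
      Polynomial.coeff_monomial]
    by_cases h : i = m
    · subst h
      simp
    · rw [if_neg (by omega), if_neg h, mul_zero]

lemma coeff_phiX2_odd (Q : Polynomial ℕ) (m : ℕ) : (phiX2 Q).coeff (2 * m + 1) = 0 := by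
  induction Q using Polynomial.induction_on' with
  | add p q hp hq => rw [map_add, Polynomial.coeff_add, hp, hq]
  | monomial i a =>
    rw [phiX2_monomial, Polynomial.coeff_C_mul, Polynomial.coeff_X_pow,
      if_neg (by omega), mul_zero]

lemma coeff_sum_X_pow {ι : Type*} (F : Finset ι) (e : ι → ℕ) (m : ℕ) :
    (∑ q ∈ F, (X : Polynomial ℕ) ^ (e q)).coeff m
      = ((F.filter fun q => e q = m).card : ℕ) := by
  classical
  rw [Polynomial.finset_sum_coeff, Finset.card_filter]
  apply Finset.sum_congr rfl
  intro q _
  rw [Polynomial.coeff_X_pow]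
  by_cases h : e q = m
  · rw [if_pos h.symm, if_pos h]
  · rw [if_neg (fun hc => h hc.symm), if_neg h]

lemma halving {ι : Type*} (F : Finset ι) (e : ι → ℕ) (P : Polynomial ℕ)
    (h : ∑ q ∈ F, (X : Polynomial ℕ) ^ e q = phiX2 P) :
    ∑ q ∈ F, (X : Polynomial ℕ) ^ (e q / 2) = P := by
  classical
  ext m
  rw [coeff_sum_X_pow]
  have hsplit : F.filter (fun q => e q / 2 = m)
      = F.filter (fun q => e q = 2 * m) ∪ F.filter (fun q => e q = 2 * m + 1) := by
    ext q
    simp only [Finset.mem_filter, Finset.mem_union]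
    constructor
    · rintro ⟨hq, hq2⟩
      rcases Nat.lt_or_ge (e q) (2 * m + 1) with hc | hc
      · exact Or.inl ⟨hq, by omega⟩
      · exact Or.inr ⟨hq, by omega⟩
    · rintro (⟨hq, h2⟩ | ⟨hq, h2⟩) <;> exact ⟨hq, by omega⟩
  have hdisj : Disjoint (F.filter fun q => e q = 2 * m) (F.filter fun q => e q = 2 * m + 1) := by
    rw [Finset.disjoint_left]
    intro q h1 h2
    rw [Finset.mem_filter] at h1 h2
    omega
  have h1 := congrArg (fun u : Polynomial ℕ => u.coeff (2 * m)) h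
  have h2 := congrArg (fun u : Polynomial ℕ => u.coeff (2 * m + 1)) h
  rw [coeff_sum_X_pow, coeff_phiX2_even] at h1
  rw [coeff_sum_X_pow, coeff_phiX2_odd] at h2
  rw [hsplit, Finset.card_union_of_disjoint hdisj]
  omega

end SP

open SP Polynomial

/-- For an `r`-core `γ`: the sum over all partitions `λ` reachable from `γ` by `n`
`r`-ribbon additions of the square of the spin generating polynomial
`F^{λ/γ}(q^{1/2}) = Σ_T q^{spin T}` equals `n!·(1 + q + ⋯ + q^{r-1})^n`.
(Exponents are written as `(totH T₁ + totH T₂)/2 = spin T₁ + spin T₂`, which is an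
integer since the two tableaux have the same shape.) -/
theorem stmt9 (r : ℕ) (hr : 1 ≤ r) (γ : ℕ → ℕ) (hγ : IsPartition γ)
    (hcore : ∀ k : ℤ, ¬(edgeSeq γ (k - r) = 0 ∧ edgeSeq γ k = 1)) (n : ℕ) :
    (∑ᶠ T ∈ {T : (Fin (n + 1) → ℕ → ℕ) × (Fin (n + 1) → ℕ → ℕ) |
        IsSRT r n γ T.1 ∧ IsSRT r n γ T.2 ∧ T.1 (Fin.last n) = T.2 (Fin.last n)},
      (Polynomial.X : Polynomial ℕ) ^ ((totH r n T.1 + totH r n T.2) / 2))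
    = (n.factorial : Polynomial ℕ) *
        (∑ i ∈ Finset.range r, (Polynomial.X : Polynomial ℕ) ^ i) ^ n := by
  classical
  set g : ℤ → ℕ := edgeSeq γ with hgdef
  have hγE : InE g := inE_edgeSeq hγ
  have htame : Tame g := hγE.tame
  have hD : dstep r g = 0 := by
    have hrem : remF r g = ∅ := by
      ext p
      rw [mem_remF htame]
      simp only [Finset.notMem_empty, iff_false]
      intro hp
      exact hcore p ⟨hp.1, hp.2⟩
    rw [dstep, hrem, Finset.sum_empty]
  have hVL : ∀ l, l ∈ VL r n g → l.length = n ∧ ValidL r g l :=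
    fun l hl => (mem_VL htame hr).mp hl
  set F : Finset (List ℤ × List ℤ) :=
    (VL r n g ×ˢ VL r n g).filter (fun q => stSeq r g q.2 = stSeq r g q.1) with hFdef
  have hFmem : ∀ q : List ℤ × List ℤ, q ∈ F ↔
      q.1 ∈ VL r n g ∧ q.2 ∈ VL r n g ∧ stSeq r g q.2 = stSeq r g q.1 := by
    intro q
    rw [hFdef, Finset.mem_filter, Finset.mem_product]
    tauto
  have E1 : ∑ q ∈ F, (X : Polynomial ℕ) ^ (wtL r g q.1 + wtL r g q.2)
      = (n.factorial : Polynomial ℕ)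
          * (∑ i ∈ Finset.range r, (X : Polynomial ℕ) ^ (2 * i)) ^ n := by
    rw [hFdef, Finset.sum_filter, Finset.sum_product, ← pair_lists n g]
    exact pair_main hr htame hD n
  have htake : ∀ l ∈ VL r n g, l.take n = l := by
    intro l hl
    rw [← (hVL l hl).1]
    exact List.take_length
  have hphi : phiX2 ((n.factorial : Polynomial ℕ)
        * (∑ i ∈ Finset.range r, (X : Polynomial ℕ) ^ i) ^ n)
      = (n.factorial : Polynomial ℕ)
        * (∑ i ∈ Finset.range r, (X : Polynomial ℕ) ^ (2 * i)) ^ n := by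
    rw [map_mul, map_pow, map_natCast, map_sum]
    congr 2
    apply Finset.sum_congr rfl
    intro i _
    rw [map_pow, pow_mul]
    congr 1
    exact Polynomial.eval₂_X _ _
  have hSet : {T : (Fin (n + 1) → ℕ → ℕ) × (Fin (n + 1) → ℕ → ℕ) |
        IsSRT r n γ T.1 ∧ IsSRT r n γ T.2 ∧ T.1 (Fin.last n) = T.2 (Fin.last n)}
      = (fun q : List ℤ × List ℤ => (chainOf r n γ q.1, chainOf r n γ q.2)) '' ↑F := by
    ext T
    simp only [Set.mem_setOf_eq, Set.mem_image, Finset.mem_coe]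
    constructor
    · rintro ⟨h1, h2, h3⟩
      obtain ⟨l, hlmem, hlst⟩ := exists_list hr n γ T.1 h1
      obtain ⟨l', hl'mem, hl'st⟩ := exists_list hr n γ T.2 h2
      have hT1 : T.1 = chainOf r n γ l := by
        funext i
        rw [chainOf, ← hlst i]
        exact (toPart_edgeSeq (h1.2.1 i)).symm
      have hT2 : T.2 = chainOf r n γ l' := by
        funext i
        rw [chainOf, ← hl'st i]
        exact (toPart_edgeSeq (h2.2.1 i)).symm
      refine ⟨(l, l'), ?_, ?_⟩
      · rw [hFmem]
        refine ⟨hlmem, hl'mem, ?_⟩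
        have e1 : edgeSeq (T.1 (Fin.last n)) = stSeq r g l := by
          rw [hlst (Fin.last n), Fin.val_last, htake l hlmem]
        have e2 : edgeSeq (T.2 (Fin.last n)) = stSeq r g l' := by
          rw [hl'st (Fin.last n), Fin.val_last, htake l' hl'mem]
        rw [← e1, ← e2, h3]
      · show (chainOf r n γ l, chainOf r n γ l') = T
        rw [← hT1, ← hT2]
    · rintro ⟨q, hq, rfl⟩
      rw [hFmem] at hq
      obtain ⟨hq1, hq2, hqst⟩ := hq
      have s1 := chainOf_spec hr hγ hq1
      have s2 := chainOf_spec hr hγ hq2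
      refine ⟨s1.2.1, s2.2.1, ?_⟩
      show chainOf r n γ q.1 (Fin.last n) = chainOf r n γ q.2 (Fin.last n)
      rw [chainOf, chainOf, Fin.val_last, htake _ hq1, htake _ hq2, hqst]
  have hInj : Set.InjOn
      (fun q : List ℤ × List ℤ => (chainOf r n γ q.1, chainOf r n γ q.2)) ↑F := by
    have key : ∀ (u v : List ℤ), u ∈ VL r n g → v ∈ VL r n g →
        chainOf r n γ u = chainOf r n γ v → u = v := by
      intro u v hu hv huv
      have hu' := hVL u hu
      have hv' := hVL v hv
      have hfin : ∀ i : Fin (n+1), stSeq r g (u.take ↑i) = stSeq r g (v.take ↑i) := by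
        intro i
        rw [← (chainOf_spec hr hγ hu).1 i, ← (chainOf_spec hr hγ hv).1 i, huv]
      have hst : ∀ i : ℕ, stSeq r g (u.take i) = stSeq r g (v.take i) := by
        intro i
        rcases le_or_gt i n with hi | hi
        · exact hfin ⟨i, by omega⟩
        · rw [List.take_of_length_le (by rw [hu'.1]; omega),
              List.take_of_length_le (by rw [hv'.1]; omega)]
          have h9 := hfin ⟨n, by omega⟩
          have e9 : ((⟨n, by omega⟩ : Fin (n+1)) : ℕ) = n := rfl
          rw [e9, htake u hu, htake v hv] at h9
          exact h9
      exact stSeq_inj hr u v g hu'.2 hv'.2 (by rw [hu'.1, hv'.1]) hst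
    intro a ha b hb hab
    rw [Finset.mem_coe, hFmem] at ha hb
    simp only [Prod.mk.injEq] at hab
    exact Prod.ext (key _ _ ha.1 hb.1 hab.1) (key _ _ ha.2.1 hb.2.1 hab.2)
  rw [hSet, finsum_mem_image hInj, finsum_mem_coe_finset]
  refine Eq.trans (Finset.sum_congr rfl fun q hq => ?_)
    (halving F (fun q => wtL r g q.1 + wtL r g q.2)
      ((n.factorial : Polynomial ℕ) * (∑ i ∈ Finset.range r, (X : Polynomial ℕ) ^ i) ^ n)
      (E1.trans hphi.symm))
  rw [hFmem] at hq
  show (X : Polynomial ℕ) ^ ((totH r n (chainOf r n γ q.1) + totH r n (chainOf r n γ q.2)) / 2)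
      = (X : Polynomial ℕ) ^ ((wtL r g q.1 + wtL r g q.2) / 2)
  rw [(chainOf_spec hr hγ hq.1).2.2, (chainOf_spec hr hγ hq.2.1).2.2]
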